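/- (Uniqueness in errors-and-erasures decoding of Tanner codes) Let ${\mathcal C}_{\mathrm{Tan}}$ be the Tanner code on an $(n,d,\lambda)$-expander $G=(L,R,E)$ with left code ${\mathcal C}_1$ of distance $\delta_L$ and right code ${\mathcal C}_2$ of distance $\delta_R$, and suppose $\lambda \le \frac{\varepsilon}{8}\min(\delta_L,\delta_R)$ for some $\varepsilon > 0$. Let $g \in ({\mathcal C}_1 \cup \{\bot\})^L$ be a left-local assignment with an $s$ fraction of erasures. Then there is at most one codeword $h \in {\mathcal C}_{\mathrm{Tan}}$ satisfying $2\Delta_L(g,h) + s \le \delta_R - 4\varepsilon$, where $\Delta_L(g,h)$ is the fraction of non-erased left vertices $\ell$ with $g_\ell \ne h_\ell$ (divided by $|L|$). -/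

import Mathlib

set_option maxHeartbeats 1000000

open Finset

open scoped Classical

/-- Number of edges of the (sub)graph `P` between `S` and `T`. -/
noncomputable def eCount {L R : Type*} (P : L → R → Prop) (S : Finset L) (T : Finset R) : ℕ :=
  ((S ×ˢ T).filter fun p => P p.1 p.2).card

private lemma side_bound {L R A : Type*} [Fintype L] [Fintype R] {d : ℕ} {G : L → R → Prop}
    (ord : ∀ ℓ : L, Fin d ≃ {r : R // G ℓ r}) (h₁ h₂ : L → R → A) (δ : ℝ)
    (hloc : ∀ ℓ : L, ((fun k => h₁ ℓ (ord ℓ k).1) ≠ fun k => h₂ ℓ (ord ℓ k).1) →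
      δ * d ≤ ((Finset.univ.filter fun k : Fin d =>
        h₁ ℓ (ord ℓ k).1 ≠ h₂ ℓ (ord ℓ k).1).card : ℝ)) :
    δ * d * ((Finset.univ.filter fun ℓ : L => ∃ r, G ℓ r ∧ h₁ ℓ r ≠ h₂ ℓ r).card : ℝ) ≤
      (((Finset.univ ×ˢ Finset.univ).filter
        fun p : L × R => G p.1 p.2 ∧ h₁ p.1 p.2 ≠ h₂ p.1 p.2).card : ℝ) := by
  classical
  set S := Finset.univ.filter fun ℓ : L => ∃ r, G ℓ r ∧ h₁ ℓ r ≠ h₂ ℓ r with hS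
  set D := (Finset.univ ×ˢ Finset.univ).filter
      fun p : L × R => G p.1 p.2 ∧ h₁ p.1 p.2 ≠ h₂ p.1 p.2 with hD
  have key : ∀ ℓ ∈ S, δ * d ≤ ((D.filter fun p => p.1 = ℓ).card : ℝ) := by
    intro ℓ hℓ
    obtain ⟨r, hGr, hner⟩ := (Finset.mem_filter.mp hℓ).2
    have hne : (fun k => h₁ ℓ (ord ℓ k).1) ≠ fun k => h₂ ℓ (ord ℓ k).1 := by
      intro hcontra
      apply hner
      have := congrFun hcontra ((ord ℓ).symm ⟨r, hGr⟩)
      simpa using this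
    refine (hloc ℓ hne).trans ?_
    have hcard : (Finset.univ.filter fun k : Fin d =>
        h₁ ℓ (ord ℓ k).1 ≠ h₂ ℓ (ord ℓ k).1).card ≤ (D.filter fun p => p.1 = ℓ).card := by
      apply Finset.card_le_card_of_injOn (fun k => (ℓ, ((ord ℓ k).1 : R)))
      · intro k hk
        simp only [Finset.mem_coe, Finset.mem_filter, Finset.mem_univ, true_and] at hk
        refine Finset.mem_filter.mpr ⟨Finset.mem_filter.mpr ⟨?_, ⟨(ord ℓ k).2, hk⟩⟩, rfl⟩
        exact Finset.mem_product.mpr ⟨Finset.mem_univ _, Finset.mem_univ _⟩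
      · intro k _ k' _ hkk'
        have h2 : (ord ℓ k : {r // G ℓ r}) = ord ℓ k' :=
          Subtype.ext (congrArg Prod.snd hkk')
        exact (ord ℓ).injective h2
    exact_mod_cast hcard
  have hsum : D.card = ∑ ℓ ∈ Finset.univ, (D.filter fun p => p.1 = ℓ).card :=
    Finset.card_eq_sum_card_fiberwise (fun p _ => Finset.mem_univ p.1)
  calc δ * d * (S.card : ℝ) = ∑ _ℓ ∈ S, δ * d := by
        rw [Finset.sum_const, nsmul_eq_mul]; ring
    _ ≤ ∑ ℓ ∈ S, ((D.filter fun p => p.1 = ℓ).card : ℝ) := Finset.sum_le_sum key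
    _ ≤ ∑ ℓ ∈ Finset.univ, ((D.filter fun p => p.1 = ℓ).card : ℝ) :=
        Finset.sum_le_sum_of_subset_of_nonneg (Finset.subset_univ S)
          (by intros; positivity)
    _ = (D.card : ℝ) := by rw [hsum]; push_cast; ring

/-- Uniqueness in errors-and-erasures decoding of Tanner codes: let `C_Tan` be the Tanner code
on an `(n,d,λ)`-expander `G` with left code `C₁` of distance `δL` and right code `C₂` of
distance `δR`, with `λ ≤ (ε/8)·min(δL,δR)`.  Let `g` assign to each left vertex either a
codeword of `C₁` or an erasure `⊥` (modeled as `Option`), with an `s` fraction of erasures.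
Then any two Tanner codewords `h₁, h₂` with `2Δ_L(g,hᵢ) + s ≤ δR - 4ε` agree on every
edge. -/
theorem tanner_errors_and_erasures_unique {L R A : Type*} [Fintype L] [Fintype R]
    (n d : ℕ) (hL : Fintype.card L = n) (hR : Fintype.card R = n)
    (hn : 0 < n) (hd : 0 < d)
    (G : L → R → Prop)
    (ordL : ∀ ℓ : L, Fin d ≃ {r : R // G ℓ r})
    (ordR : ∀ r : R, Fin d ≃ {ℓ : L // G ℓ r})
    (lam δL δR ε : ℝ) (hε : 0 < ε)
    (hδL : 0 < δL) (hδR : 0 < δR)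
    (hlam : lam ≤ ε / 8 * min δL δR)
    (hEML : ∀ (S : Finset L) (T : Finset R),
      |(eCount G S T : ℝ) - ((d : ℝ) / n) * S.card * T.card| ≤
        lam * d * Real.sqrt ((S.card : ℝ) * T.card))
    (C₁ C₂ : Set (Fin d → A))
    (hC₁ : ∀ c ∈ C₁, ∀ c' ∈ C₁, c ≠ c' →
      δL * d ≤ ((Finset.univ.filter fun k : Fin d => c k ≠ c' k).card : ℝ))
    (hC₂ : ∀ c ∈ C₂, ∀ c' ∈ C₂, c ≠ c' →
      δR * d ≤ ((Finset.univ.filter fun k : Fin d => c k ≠ c' k).card : ℝ))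
    (g : L → Option (Fin d → A))
    (hgC : ∀ ℓ c, g ℓ = some c → c ∈ C₁)
    (s : ℝ) (hs : s = ((Finset.univ.filter fun ℓ : L => g ℓ = none).card : ℝ) / n)
    (h₁ h₂ : L → R → A)
    (h₁L : ∀ ℓ : L, (fun k => h₁ ℓ (ordL ℓ k).1) ∈ C₁)
    (h₁R : ∀ r : R, (fun k => h₁ (ordR r k).1 r) ∈ C₂)
    (h₂L : ∀ ℓ : L, (fun k => h₂ ℓ (ordL ℓ k).1) ∈ C₁)
    (h₂R : ∀ r : R, (fun k => h₂ (ordR r k).1 r) ∈ C₂)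
    (hclose₁ : 2 * (((Finset.univ.filter fun ℓ : L =>
        g ℓ ≠ none ∧ g ℓ ≠ some fun k => h₁ ℓ (ordL ℓ k).1).card : ℝ) / n) + s ≤ δR - 4 * ε)
    (hclose₂ : 2 * (((Finset.univ.filter fun ℓ : L =>
        g ℓ ≠ none ∧ g ℓ ≠ some fun k => h₂ ℓ (ordL ℓ k).1).card : ℝ) / n) + s ≤ δR - 4 * ε) :
    ∀ ℓ r, G ℓ r → h₁ ℓ r = h₂ ℓ r := by
  classical
  by_contra hcon
  push_neg at hcon
  obtain ⟨ℓ₀, r₀, hG₀, hne₀⟩ := hcon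
  set S := Finset.univ.filter fun ℓ : L => ∃ r, G ℓ r ∧ h₁ ℓ r ≠ h₂ ℓ r with hSdef
  set T := Finset.univ.filter fun r : R => ∃ ℓ, G ℓ r ∧ h₁ ℓ r ≠ h₂ ℓ r with hTdef
  set D := (Finset.univ ×ˢ Finset.univ).filter
      fun p : L × R => G p.1 p.2 ∧ h₁ p.1 p.2 ≠ h₂ p.1 p.2 with hDdef
  have hℓ₀S : ℓ₀ ∈ S := Finset.mem_filter.mpr ⟨Finset.mem_univ _, r₀, hG₀, hne₀⟩
  have hr₀T : r₀ ∈ T := Finset.mem_filter.mpr ⟨Finset.mem_univ _, ℓ₀, hG₀, hne₀⟩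
  set N : ℝ := (n : ℝ) with hNdef
  have hN : (0 : ℝ) < N := by rw [hNdef]; exact_mod_cast hn
  have hdR : (0 : ℝ) < (d : ℝ) := by exact_mod_cast hd
  set a : ℝ := (S.card : ℝ) with hadef
  set b : ℝ := (T.card : ℝ) with hbdef
  have ha : 0 < a := by
    have : 0 < S.card := Finset.card_pos.mpr ⟨ℓ₀, hℓ₀S⟩
    rw [hadef]; exact_mod_cast this
  have hb : 0 < b := by
    have : 0 < T.card := Finset.card_pos.mpr ⟨r₀, hr₀T⟩
    rw [hbdef]; exact_mod_cast this
  have haN : a ≤ N := by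
    have := Finset.card_le_card (Finset.subset_univ S)
    rw [Finset.card_univ, hL] at this
    rw [hadef, hNdef]; exact_mod_cast this
  have hbN : b ≤ N := by
    have := Finset.card_le_card (Finset.subset_univ T)
    rw [Finset.card_univ, hR] at this
    rw [hbdef, hNdef]; exact_mod_cast this
  -- local views of h₁, h₂ differ at ℓ₀ and r₀
  have hviewL : (fun k => h₁ ℓ₀ (ordL ℓ₀ k).1) ≠ fun k => h₂ ℓ₀ (ordL ℓ₀ k).1 := by
    intro hcontra
    apply hne₀
    have := congrFun hcontra ((ordL ℓ₀).symm ⟨r₀, hG₀⟩)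
    simpa using this
  have hviewR : (fun k => h₁ (ordR r₀ k).1 r₀) ≠ fun k => h₂ (ordR r₀ k).1 r₀ := by
    intro hcontra
    apply hne₀
    have := congrFun hcontra ((ordR r₀).symm ⟨ℓ₀, hG₀⟩)
    simpa using this
  -- δL ≤ 1, δR ≤ 1
  have hδL1 : δL ≤ 1 := by
    have h := hC₁ _ (h₁L ℓ₀) _ (h₂L ℓ₀) hviewL
    have hle : ((Finset.univ.filter fun k : Fin d =>
        h₁ ℓ₀ (ordL ℓ₀ k).1 ≠ h₂ ℓ₀ (ordL ℓ₀ k).1).card : ℝ) ≤ d := by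
      have := Finset.card_filter_le (Finset.univ : Finset (Fin d))
        (fun k => h₁ ℓ₀ (ordL ℓ₀ k).1 ≠ h₂ ℓ₀ (ordL ℓ₀ k).1)
      simp only [Finset.card_univ, Fintype.card_fin] at this
      exact_mod_cast this
    nlinarith
  have hδR1 : δR ≤ 1 := by
    have h := hC₂ _ (h₁R r₀) _ (h₂R r₀) hviewR
    have hle : ((Finset.univ.filter fun k : Fin d =>
        h₁ (ordR r₀ k).1 r₀ ≠ h₂ (ordR r₀ k).1 r₀).card : ℝ) ≤ d := by
      have := Finset.card_filter_le (Finset.univ : Finset (Fin d))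
        (fun k => h₁ (ordR r₀ k).1 r₀ ≠ h₂ (ordR r₀ k).1 r₀)
      simp only [Finset.card_univ, Fintype.card_fin] at this
      exact_mod_cast this
    nlinarith
  -- left counting bound
  have hSbound : δL * d * a ≤ (D.card : ℝ) :=
    side_bound ordL h₁ h₂ δL (fun ℓ hne => hC₁ _ (h₁L ℓ) _ (h₂L ℓ) hne)
  -- right counting bound (apply side_bound with sides swapped)
  have hTbound : δR * d * b ≤
      ((((Finset.univ ×ˢ Finset.univ).filter
        fun p : R × L => G p.2 p.1 ∧ h₁ p.2 p.1 ≠ h₂ p.2 p.1).card : ℝ)) :=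
    side_bound (G := fun r ℓ => G ℓ r) ordR (fun r ℓ => h₁ ℓ r) (fun r ℓ => h₂ ℓ r) δR
      (fun r hne => hC₂ _ (h₁R r) _ (h₂R r) hne)
  have hswap : ((Finset.univ ×ˢ Finset.univ).filter
      fun p : R × L => G p.2 p.1 ∧ h₁ p.2 p.1 ≠ h₂ p.2 p.1).card = D.card := by
    apply Finset.card_bij (fun p _ => (p.2, p.1))
    · intro p hp
      simp only [hDdef, Finset.mem_filter, Finset.mem_product, Finset.mem_univ,
        true_and] at hp ⊢
      exact hp
    · intro p hp q hq hpq
      exact Prod.ext (congrArg Prod.snd hpq) (congrArg Prod.fst hpq)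
    · intro p hp
      refine ⟨(p.2, p.1), ?_, rfl⟩
      simp only [hDdef, Finset.mem_filter, Finset.mem_product, Finset.mem_univ,
        true_and] at hp ⊢
      exact hp
  rw [hswap] at hTbound
  -- D is contained in the edge set between S and T
  have hDE : (D.card : ℝ) ≤ (eCount G S T : ℝ) := by
    have : D ⊆ (S ×ˢ T).filter fun p => G p.1 p.2 := by
      intro p hp
      simp only [hDdef, Finset.mem_filter, Finset.mem_product, Finset.mem_univ,
        true_and] at hp
      refine Finset.mem_filter.mpr ⟨Finset.mem_product.mpr ⟨?_, ?_⟩, hp.1⟩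
      · exact Finset.mem_filter.mpr ⟨Finset.mem_univ _, p.2, hp.1, hp.2⟩
      · exact Finset.mem_filter.mpr ⟨Finset.mem_univ _, p.1, hp.1, hp.2⟩
    exact_mod_cast Finset.card_le_card this
  -- expander mixing
  set x : ℝ := Real.sqrt (a * b) with hxdef
  have hx0 : 0 ≤ x := Real.sqrt_nonneg _
  have hx2 : x ^ 2 = a * b := Real.sq_sqrt (by positivity)
  have hmix : (eCount G S T : ℝ) ≤ (d / N) * a * b + lam * d * x := by
    have := hEML S T
    have h' := (abs_le.mp this).2
    linarith
  -- erasure bound : a ≤ (δR - 4ε) N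
  set Z := Finset.univ.filter fun ℓ : L => g ℓ = none with hZdef
  set E₁ := Finset.univ.filter fun ℓ : L =>
      g ℓ ≠ none ∧ g ℓ ≠ some fun k => h₁ ℓ (ordL ℓ k).1 with hE₁def
  set E₂ := Finset.univ.filter fun ℓ : L =>
      g ℓ ≠ none ∧ g ℓ ≠ some fun k => h₂ ℓ (ordL ℓ k).1 with hE₂def
  have hSsub : S ⊆ Z ∪ E₁ ∪ E₂ := by
    intro ℓ hℓ
    obtain ⟨r, hGr, hner⟩ := (Finset.mem_filter.mp hℓ).2
    have hne : (fun k => h₁ ℓ (ordL ℓ k).1) ≠ fun k => h₂ ℓ (ordL ℓ k).1 := by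
      intro hcontra
      apply hner
      have := congrFun hcontra ((ordL ℓ).symm ⟨r, hGr⟩)
      simpa using this
    by_cases hgl : g ℓ = none
    · exact Finset.mem_union_left _ (Finset.mem_union_left _
        (Finset.mem_filter.mpr ⟨Finset.mem_univ _, hgl⟩))
    · by_cases hg1 : g ℓ = some fun k => h₁ ℓ (ordL ℓ k).1
      · have hg2 : g ℓ ≠ some fun k => h₂ ℓ (ordL ℓ k).1 := by
          intro hg2
          rw [hg1] at hg2
          exact hne (Option.some.inj hg2)
        exact Finset.mem_union_right _
          (Finset.mem_filter.mpr ⟨Finset.mem_univ _, hgl, hg2⟩)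
      · exact Finset.mem_union_left _ (Finset.mem_union_right _
          (Finset.mem_filter.mpr ⟨Finset.mem_univ _, hgl, hg1⟩))
  have hacard : a ≤ (Z.card : ℝ) + (E₁.card : ℝ) + (E₂.card : ℝ) := by
    have h1 := Finset.card_le_card hSsub
    have h2 := Finset.card_union_le (Z ∪ E₁) E₂
    have h3 := Finset.card_union_le Z E₁
    have : S.card ≤ Z.card + E₁.card + E₂.card := by omega
    rw [hadef]; exact_mod_cast this
  have hG3 : a ≤ (δR - 4 * ε) * N := by
    rw [hs] at hclose₁ hclose₂
    have e1 : 2 * ((E₁.card : ℝ) / N) + (Z.card : ℝ) / N ≤ δR - 4 * ε := hclose₁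
    have e2 : 2 * ((E₂.card : ℝ) / N) + (Z.card : ℝ) / N ≤ δR - 4 * ε := hclose₂
    have e1' : 2 * (E₁.card : ℝ) + (Z.card : ℝ) ≤ (δR - 4 * ε) * N := by
      have key : (2 * (E₁.card : ℝ) + (Z.card : ℝ)) / N ≤ δR - 4 * ε := by
        rw [add_div, mul_div_assoc]; exact e1
      exact (div_le_iff₀ hN).mp key
    have e2' : 2 * (E₂.card : ℝ) + (Z.card : ℝ) ≤ (δR - 4 * ε) * N := by
      have key : (2 * (E₂.card : ℝ) + (Z.card : ℝ)) / N ≤ δR - 4 * ε := by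
        rw [add_div, mul_div_assoc]; exact e2
      exact (div_le_iff₀ hN).mp key
    have hZ0 : (0 : ℝ) ≤ (Z.card : ℝ) := Nat.cast_nonneg _
    have hE10 : (0 : ℝ) ≤ (E₁.card : ℝ) := Nat.cast_nonneg _
    have hE20 : (0 : ℝ) ≤ (E₂.card : ℝ) := Nat.cast_nonneg _
    linarith
  clear_value S T D Z E₁ E₂ N a b x
  clear hclose₁ hclose₂ hEML hxdef hadef hbdef hNdef hSdef hTdef hDdef hZdef hE₁def hE₂def
  clear hSsub hacard hℓ₀S hr₀T hviewL hviewR hgC hC₁ hC₂ h₁L h₁R h₂L h₂R ordL ordR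
  -- clean inequalities
  have G1 : δL * a * N ≤ a * b + lam * x * N := by
    have h1 : δL * d * a ≤ (d / N) * a * b + lam * d * x := by linarith
    have h2 : δL * d * a * N ≤ ((d / N) * a * b + lam * d * x) * N :=
      mul_le_mul_of_nonneg_right h1 (le_of_lt hN)
    have h3 : (d / N) * a * b * N = (d : ℝ) * (a * b) := by
      field_simp
    have h4 : (d : ℝ) * (δL * a * N) ≤ (d : ℝ) * (a * b + lam * x * N) := by
      linarith [h2, h3]
    exact le_of_mul_le_mul_left h4 hdR
  have G2 : δR * b * N ≤ a * b + lam * x * N := by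
    have h1 : δR * d * b ≤ (d / N) * a * b + lam * d * x := by linarith
    have h2 : δR * d * b * N ≤ ((d / N) * a * b + lam * d * x) * N :=
      mul_le_mul_of_nonneg_right h1 (le_of_lt hN)
    have h3 : (d / N) * a * b * N = (d : ℝ) * (a * b) := by
      field_simp
    have h4 : (d : ℝ) * (δR * b * N) ≤ (d : ℝ) * (a * b + lam * x * N) := by
      linarith [h2, h3]
    exact le_of_mul_le_mul_left h4 hdR
  clear hswap hSbound hTbound hDE hmix hs
  clear S T D Z E₁ E₂ G g C₁ C₂ hL hR hG₀ hne₀ ℓ₀ r₀ h₁ h₂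
  -- 4ε ≤ δR, hence ε ≤ 1/4
  have hεδR : 4 * ε ≤ δR := by
    have h0 : 0 < (δR - 4 * ε) * N := lt_of_lt_of_le ha hG3
    nlinarith [hN]
  have hε14 : ε ≤ 1 / 4 := by linarith
  -- 4εb ≤ lam x
  have habG3 : a * b ≤ (δR - 4 * ε) * N * b := mul_le_mul_of_nonneg_right hG3 hb.le
  have G4 : 4 * ε * b ≤ lam * x := by
    have h4 : 4 * ε * b * N ≤ lam * x * N := by nlinarith [G2, habG3]
    exact le_of_mul_le_mul_right h4 hN
  have hlamx : 0 < lam * x := lt_of_lt_of_le (by positivity) G4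
  have hxpos : 0 < x := by
    rcases lt_or_eq_of_le hx0 with h | h
    · exact h
    · exfalso; rw [← h, mul_zero] at hlamx; exact lt_irrefl 0 hlamx
  have hlam0 : 0 < lam := by
    by_contra hcl
    push_neg at hcl
    nlinarith [hlamx, hxpos]
  -- step1 : 16 ε² b ≤ lam² a
  have sq : (4 * ε * b) * (4 * ε * b) ≤ (lam * x) * (lam * x) :=
    mul_self_le_mul_self (by positivity) G4
  have sq' : 16 * ε ^ 2 * (b * b) ≤ lam ^ 2 * (a * b) := by
    have hxx : lam ^ 2 * x ^ 2 = lam ^ 2 * (a * b) := by rw [hx2]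
    nlinarith [sq, hxx]
  have step1 : 16 * ε ^ 2 * b ≤ lam ^ 2 * a := by
    nlinarith [sq', hb]
  -- step2 : 4 ε x ≤ lam a
  have sq2 : 16 * ε ^ 2 * x ^ 2 ≤ lam ^ 2 * (a * a) := by
    rw [hx2]; nlinarith [step1, ha]
  have step2 : 4 * ε * x ≤ lam * a := by
    nlinarith [sq2, hx0, ha, hlam0, mul_pos hlam0 ha]
  -- combine with G1
  have p0 : 16 * ε ^ 2 * (δL * a * N) ≤ 16 * ε ^ 2 * (a * b + lam * x * N) :=
    mul_le_mul_of_nonneg_left G1 (by positivity)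
  have p1 : 16 * ε ^ 2 * (b * a) ≤ lam ^ 2 * (a * a) := by nlinarith [step1, ha]
  have p2 : 4 * ε * x * (lam * N) ≤ lam * a * (lam * N) :=
    mul_le_mul_of_nonneg_right step2 (by positivity)
  have p2' : 4 * ε * (4 * ε * x * (lam * N)) ≤ 4 * ε * (lam * a * (lam * N)) :=
    mul_le_mul_of_nonneg_left p2 (by positivity)
  have KEY : 16 * ε ^ 2 * (δL * a * N) ≤ lam ^ 2 * (a * a) + 4 * ε * lam ^ 2 * (a * N) := by
    linarith [p0, p1, p2']
  -- lam² ≤ (ε/8 δL)²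
  have hlam' : lam ≤ ε / 8 * δL :=
    hlam.trans (mul_le_mul_of_nonneg_left (min_le_left δL δR) (by positivity))
  have hlamsq : lam ^ 2 ≤ (ε / 8 * δL) ^ 2 := by
    nlinarith [hlam', hlam0]
  have q1 : lam ^ 2 * (a * a) ≤ (ε / 8 * δL) ^ 2 * (a * a) :=
    mul_le_mul_of_nonneg_right hlamsq (by positivity)
  have q2 : 4 * ε * lam ^ 2 * (a * N) ≤ 4 * ε * (ε / 8 * δL) ^ 2 * (a * N) := by
    nlinarith [mul_le_mul_of_nonneg_right hlamsq
      (by positivity : (0:ℝ) ≤ 4 * ε * (a * N))]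
  have q3 : (ε / 8 * δL) ^ 2 * (a * a) ≤ (ε / 8 * δL) ^ 2 * (a * N) := by
    have : a * a ≤ a * N := mul_le_mul_of_nonneg_left haN ha.le
    exact mul_le_mul_of_nonneg_left this (by positivity)
  have q4 : 4 * ε * (ε / 8 * δL) ^ 2 * (a * N) ≤ (ε / 8 * δL) ^ 2 * (a * N) := by
    nlinarith [mul_nonneg (by positivity : (0:ℝ) ≤ (ε / 8 * δL) ^ 2)
      (by positivity : (0:ℝ) ≤ a * N), hε14, hε]
  have final : 16 * δL * (ε ^ 2 * (a * N)) ≤ δL ^ 2 / 32 * (ε ^ 2 * (a * N)) := by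
    linarith [KEY, q1, q2, q3, q4]
  have hposf : (0 : ℝ) < ε ^ 2 * (a * N) := by positivity
  have hfin : 16 * δL ≤ δL ^ 2 / 32 := le_of_mul_le_mul_right final hposf
  have hsq : δL * δL ≤ δL * 1 := mul_le_mul_of_nonneg_left hδL1 hδL.le
  linarith [hfin, hsq, hδL]
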